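/- Fix d ≥ 1, L ∈ ℝ, and c > 0. Define p*_i = L/d + c·(d + 1 - 2i)/2 for i = 1,…,d. Then p* satisfies ∑_{i=1}^d p*_i = L and p*_{i-1} - p*_i = c for all i = 2,…,d. Moreover, for every p ∈ ℝ^d with ∑_{i=1}^d p_i = L and p_{i-1} - p_i ≥ c for all i = 2,…,d, one has ∑_{i=1}^d p_i² ≥ ∑_{i=1}^d (p*_i)², with equality if and only if p = p*. -/

import Mathlib

lemma sum_Icc_id_real (n : ℕ) :
    ∑ i ∈ Finset.Icc 1 n, (i : ℝ) = n * (n + 1) / 2 := by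
  induction n with
  | zero => simp
  | succ n ih =>
    rw [Finset.sum_Icc_succ_top (by omega : 1 ≤ n + 1), ih]
    push_cast; ring

/-- The GSA arithmetic progression of slope -c is feasible and is the unique
minimizer of the sum of squares among profiles with fixed sum L and all
adjacent gaps at least c. -/
theorem gsa_min_variance
    (d : ℕ) (hd : 1 ≤ d) (L c : ℝ) (hc : 0 < c)
    (pstar : ℕ → ℝ)
    (hpstar : ∀ i, pstar i = L / d + c * ((d : ℝ) + 1 - 2 * i) / 2) :
    (∑ i ∈ Finset.Icc 1 d, pstar i = L) ∧
    (∀ i, 2 ≤ i → i ≤ d → pstar (i - 1) - pstar i = c) ∧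
    (∀ p : ℕ → ℝ, (∑ i ∈ Finset.Icc 1 d, p i = L) →
      (∀ i, 2 ≤ i → i ≤ d → p (i - 1) - p i ≥ c) →
      ((∑ i ∈ Finset.Icc 1 d, (p i) ^ 2 ≥ ∑ i ∈ Finset.Icc 1 d, (pstar i) ^ 2) ∧
       ((∑ i ∈ Finset.Icc 1 d, (p i) ^ 2 = ∑ i ∈ Finset.Icc 1 d, (pstar i) ^ 2) ↔
         ∀ i, 1 ≤ i → i ≤ d → p i = pstar i))) := by
  have hd0 : (d : ℝ) ≠ 0 := by positivity
  have hcard : (Finset.Icc 1 d).card = d := by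
    rw [Nat.card_Icc]; omega
  have hsumstar : ∑ i ∈ Finset.Icc 1 d, pstar i = L := by
    have : ∑ i ∈ Finset.Icc 1 d, pstar i
        = ∑ i ∈ Finset.Icc 1 d, (L / d + c * ((d : ℝ) + 1) / 2 - c * i) := by
      apply Finset.sum_congr rfl
      intro i _
      rw [hpstar i]; ring
    rw [this, Finset.sum_sub_distrib, Finset.sum_const, hcard, ← Finset.mul_sum,
      sum_Icc_id_real]
    simp only [nsmul_eq_mul]
    field_simp
    ring
  have hgapstar : ∀ i, 2 ≤ i → i ≤ d → pstar (i - 1) - pstar i = c := by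
    intro i h2 _
    rw [hpstar (i - 1), hpstar i]
    have : ((i - 1 : ℕ) : ℝ) = (i : ℝ) - 1 := by
      have : (1:ℕ) ≤ i := by omega
      push_cast [Nat.cast_sub this]; ring
    rw [this]; ring
  refine ⟨hsumstar, hgapstar, ?_⟩
  intro p hsum hgap
  set q : ℕ → ℝ := fun i => p i - pstar i with hq
  have hqsum : ∑ i ∈ Finset.Icc 1 d, q i = 0 := by
    simp only [hq, Finset.sum_sub_distrib, hsum, hsumstar, sub_self]
  -- q is nonincreasing on [1, d]
  have hmono : ∀ i j, 1 ≤ i → i ≤ j → j ≤ d → q j ≤ q i := by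
    intro i j hi hij hjd
    induction j with
    | zero => omega
    | succ n ih =>
      rcases Nat.lt_or_ge i (n+1) with h | h
      · have h2 : 2 ≤ n + 1 := by omega
        have hg := hgap (n+1) h2 hjd
        have hgs := hgapstar (n+1) h2 hjd
        have hstep : q (n+1) ≤ q n := by
          simp only [hq]
          have : (n + 1) - 1 = n := by omega
          rw [this] at hg hgs
          linarith
        exact le_trans hstep (ih (by omega) (by omega))
      · have : i = n + 1 := by omega
        simp [this]
  have hanti : AntivaryOn (fun i : ℕ => (i : ℝ)) q ↑(Finset.Icc 1 d) := by
    intro i hi j hj hlt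
    simp only [Finset.coe_Icc, Set.mem_Icc] at hi hj
    have : j ≤ i := by
      by_contra h
      exact absurd (hmono i j hi.1 (by omega) hj.2) (not_le.mpr hlt)
    simp only []; exact_mod_cast this
  have hcheb := hanti.card_mul_sum_le_sum_mul_sum
  rw [hqsum, mul_zero, hcard] at hcheb
  have hiq : ∑ i ∈ Finset.Icc 1 d, (i : ℝ) * q i ≤ 0 := by
    have hdpos : (0:ℝ) < d := by exact_mod_cast hd
    nlinarith
  have hpq : 0 ≤ ∑ i ∈ Finset.Icc 1 d, pstar i * q i := by
    have : ∑ i ∈ Finset.Icc 1 d, pstar i * q i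
        = (L / d + c * ((d : ℝ) + 1) / 2) * (∑ i ∈ Finset.Icc 1 d, q i)
          - c * ∑ i ∈ Finset.Icc 1 d, (i : ℝ) * q i := by
      rw [Finset.mul_sum, Finset.mul_sum, ← Finset.sum_sub_distrib]
      apply Finset.sum_congr rfl
      intro i _
      rw [hpstar i]; ring
    rw [this, hqsum, mul_zero, zero_sub]
    nlinarith
  have hsq : 0 ≤ ∑ i ∈ Finset.Icc 1 d, (q i) ^ 2 :=
    Finset.sum_nonneg fun i _ => sq_nonneg _
  have hdecomp : ∑ i ∈ Finset.Icc 1 d, (p i) ^ 2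
      = ∑ i ∈ Finset.Icc 1 d, (pstar i) ^ 2
        + 2 * (∑ i ∈ Finset.Icc 1 d, pstar i * q i)
        + ∑ i ∈ Finset.Icc 1 d, (q i) ^ 2 := by
    rw [Finset.mul_sum, ← Finset.sum_add_distrib, ← Finset.sum_add_distrib]
    apply Finset.sum_congr rfl
    intro i _
    simp only [hq]; ring
  constructor
  · rw [hdecomp]; linarith
  · constructor
    · intro heq i hi hid
      have hqz : ∑ i ∈ Finset.Icc 1 d, (q i) ^ 2 = 0 := by
        rw [hdecomp] at heq; linarith
      have := (Finset.sum_eq_zero_iff_of_nonneg (fun i _ => sq_nonneg (q i))).mp hqz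
        i (Finset.mem_Icc.mpr ⟨hi, hid⟩)
      have : q i = 0 := by
        have := sq_eq_zero_iff.mp this; exact this
      simp only [hq] at this; linarith
    · intro h
      apply Finset.sum_congr rfl
      intro i hi
      rw [Finset.mem_Icc] at hi
      rw [h i hi.1 hi.2]
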